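/- Let D = D_1 × ··· × D_n be a product distribution on [K]^n, let θ^1, ..., θ^t be i.i.d. samples from D, let D̂_i^t(k) = (1/t)·Σ_{s=1}^t 1[θ_i^s = k] be the empirical marginal of coordinate i, and let D̂^t = Π_{i=1}^n D̂_i^t be the product of the empirical marginals. Then E[δ(D, D̂^t)] ≤ sqrt(nK/t), where δ(P, Q) = (1/2)·Σ_{θ∈[K]^n}|P(θ) − Q(θ)| is the total variation distance. -/

import Mathlib

open Finset

noncomputable section

/-- `D` is a probability distribution on the finite type `α`. -/
def IsDist {α : Type*} [Fintype α] (D : α → ℝ) : Prop :=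
  (∀ a, 0 ≤ D a) ∧ ∑ a, D a = 1

/-- The product of the empirical marginals built from `t` samples `ω : Fin t → [K]^n`:
`D̂^t(θ) = ∏_i D̂_i^t(θ_i)` with `D̂_i^t(k) = (1/t)·∑_s 1[ω s i = k]`. -/
def empProd {n K : ℕ} (t : ℕ) (ω : Fin t → (Fin n → Fin K)) (θ : Fin n → Fin K) : ℝ :=
  ∏ i, ((1 / (t : ℝ)) * ∑ s, if ω s i = θ i then (1 : ℝ) else 0)

namespace Stmt12Aux
lemma sum_pi_prod {ι : Type*} [Fintype ι] [DecidableEq ι] {κ : Type*} [Fintype κ]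
    (F : ι → κ → ℝ) : ∑ v : ι → κ, ∏ i, F i (v i) = ∏ i, ∑ k, F i k :=
  (Fintype.prod_sum F).symm

variable {t K : ℕ}

/-- The empirical distribution of `v : Fin t → Fin K`. -/
def emp (t K : ℕ) (v : Fin t → Fin K) (k : Fin K) : ℝ :=
  (1 / (t : ℝ)) * ∑ s, if v s = k then (1 : ℝ) else 0

lemma emp_nonneg (v : Fin t → Fin K) (k : Fin K) : 0 ≤ emp t K v k := by
  unfold emp; positivity

lemma emp_isDist (ht : 1 ≤ t) (v : Fin t → Fin K) : IsDist (emp t K v) := by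
  refine ⟨emp_nonneg v, ?_⟩
  unfold emp
  rw [← Finset.mul_sum, Finset.sum_comm]
  have : ∀ s : Fin t, ∑ k : Fin K, (if v s = k then (1:ℝ) else 0) = 1 := by
    intro s; simp
  rw [Finset.sum_congr rfl fun s _ => this s]
  have ht' : (t : ℝ) ≠ 0 := by positivity
  simp [ht']

variable (p : Fin K → ℝ)

lemma exp_prod (c : Fin t → Fin K → ℝ) :
    ∑ v : Fin t → Fin K, (∏ s, p (v s)) * ∏ s, c s (v s) = ∏ s, ∑ k, p k * c s k := by
  have : ∀ v : Fin t → Fin K, (∏ s, p (v s)) * ∏ s, c s (v s)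
      = ∏ s, (p (v s) * c s (v s)) := fun v => (Finset.prod_mul_distrib).symm
  rw [Finset.sum_congr rfl fun v _ => this v]
  exact sum_pi_prod (fun s x => p x * c s x)

lemma sum_W (hp : IsDist p) : ∑ v : Fin t → Fin K, (∏ s, p (v s)) = 1 := by
  have := exp_prod (t := t) p (fun _ _ => (1:ℝ))
  simpa [hp.2] using this

lemma mom1 (hp : IsDist p) (k : Fin K) (s₀ : Fin t) :
    ∑ v : Fin t → Fin K, (∏ s, p (v s)) * (if v s₀ = k then (1:ℝ) else 0) = p k := by
  have h := exp_prod p (fun s x => if s = s₀ then (if x = k then (1:ℝ) else 0) else 1)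
  have hL : ∀ v : Fin t → Fin K,
      (∏ s, (if s = s₀ then (if v s = k then (1:ℝ) else 0) else 1))
        = (if v s₀ = k then (1:ℝ) else 0) := by
    intro v
    rw [Finset.prod_ite_eq' Finset.univ s₀ (fun s => if v s = k then (1:ℝ) else 0)]
    simp
  have hR : ∀ s : Fin t, (∑ k' : Fin K, p k' * (if s = s₀ then (if k' = k then (1:ℝ) else 0) else 1))
      = if s = s₀ then p k else 1 := by
    intro s
    by_cases hs : s = s₀ <;> simp [hs, mul_ite, hp.2]
  rw [Finset.sum_congr rfl fun v _ => by rw [hL v]] at h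
  rw [h, Finset.prod_congr rfl fun s _ => hR s,
    Finset.prod_ite_eq' Finset.univ s₀ (fun _ => p k)]
  simp

lemma mom2 (hp : IsDist p) (k : Fin K) {s₀ s₁ : Fin t} (hne : s₀ ≠ s₁) :
    ∑ v : Fin t → Fin K, (∏ s, p (v s)) *
      ((if v s₀ = k then (1:ℝ) else 0) * (if v s₁ = k then (1:ℝ) else 0)) = p k ^ 2 := by
  have h := exp_prod p (fun s x =>
    (if s = s₀ then (if x = k then (1:ℝ) else 0) else 1) *
    (if s = s₁ then (if x = k then (1:ℝ) else 0) else 1))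
  have hL : ∀ v : Fin t → Fin K,
      (∏ s, ((if s = s₀ then (if v s = k then (1:ℝ) else 0) else 1) *
        (if s = s₁ then (if v s = k then (1:ℝ) else 0) else 1)))
        = (if v s₀ = k then (1:ℝ) else 0) * (if v s₁ = k then (1:ℝ) else 0) := by
    intro v
    rw [Finset.prod_mul_distrib,
      Finset.prod_ite_eq' Finset.univ s₀ (fun s => if v s = k then (1:ℝ) else 0),
      Finset.prod_ite_eq' Finset.univ s₁ (fun s => if v s = k then (1:ℝ) else 0)]
    simp
  have hR : ∀ s : Fin t, (∑ k' : Fin K, p k' *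
      ((if s = s₀ then (if k' = k then (1:ℝ) else 0) else 1) *
       (if s = s₁ then (if k' = k then (1:ℝ) else 0) else 1)))
      = (if s = s₀ then p k else 1) * (if s = s₁ then p k else 1) := by
    intro s
    by_cases h0 : s = s₀
    · have h1 : s ≠ s₁ := h0 ▸ hne
      simp [h0, h1, mul_ite, hne]
    · by_cases h1 : s = s₁ <;> simp [h0, h1, mul_ite, hp.2, Ne.symm hne]
  rw [Finset.sum_congr rfl fun v _ => by rw [hL v]] at h
  rw [h, Finset.prod_congr rfl fun s _ => hR s, Finset.prod_mul_distrib,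
    Finset.prod_ite_eq' Finset.univ s₀ (fun _ => p k),
    Finset.prod_ite_eq' Finset.univ s₁ (fun _ => p k)]
  simp [sq]


lemma exp_emp (hp : IsDist p) (ht : 1 ≤ t) (k : Fin K) :
    ∑ v : Fin t → Fin K, (∏ s, p (v s)) * emp t K v k = p k := by
  have ht' : (t : ℝ) ≠ 0 := by positivity
  unfold emp
  have : ∀ v : Fin t → Fin K, (∏ s, p (v s)) * ((1 / (t:ℝ)) * ∑ s, if v s = k then (1:ℝ) else 0)
      = (1 / (t:ℝ)) * ∑ s₀, (∏ s, p (v s)) * (if v s₀ = k then (1:ℝ) else 0) := by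
    intro v
    simp only [Finset.mul_sum]
    exact Finset.sum_congr rfl fun s₀ _ => by ring
  rw [Finset.sum_congr rfl fun v _ => this v, ← Finset.mul_sum, Finset.sum_comm]
  rw [Finset.sum_congr rfl fun s₀ _ => mom1 p hp k s₀]
  simp [ht']

lemma exp_emp_sq (hp : IsDist p) (ht : 1 ≤ t) (k : Fin K) :
    ∑ v : Fin t → Fin K, (∏ s, p (v s)) * (emp t K v k) ^ 2
      = p k / t + p k ^ 2 - p k ^ 2 / t := by
  have ht' : (t : ℝ) ≠ 0 := by positivity
  unfold emp
  have expand : ∀ v : Fin t → Fin K,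
      (∏ s, p (v s)) * ((1 / (t:ℝ)) * ∑ s, if v s = k then (1:ℝ) else 0) ^ 2
      = (1 / (t:ℝ))^2 * ∑ s₀, ∑ s₁, (∏ s, p (v s)) *
          ((if v s₀ = k then (1:ℝ) else 0) * (if v s₁ = k then (1:ℝ) else 0)) := by
    intro v
    have hsq : (∑ s, if v s = k then (1:ℝ) else 0) ^ 2
        = ∑ s₀, ∑ s₁, (if v s₀ = k then (1:ℝ) else 0) * (if v s₁ = k then (1:ℝ) else 0) := by
      rw [sq, Finset.sum_mul_sum]
    rw [mul_pow, hsq]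
    simp only [Finset.mul_sum]
    exact Finset.sum_congr rfl fun s₀ _ => Finset.sum_congr rfl fun s₁ _ => by ring
  rw [Finset.sum_congr rfl fun v _ => expand v, ← Finset.mul_sum, Finset.sum_comm]
  have inner : ∀ s₀ : Fin t, ∑ v : Fin t → Fin K, ∑ s₁, (∏ s, p (v s)) *
      ((if v s₀ = k then (1:ℝ) else 0) * (if v s₁ = k then (1:ℝ) else 0))
      = p k + ((t:ℝ) - 1) * p k ^ 2 := by
    intro s₀
    rw [Finset.sum_comm]
    have each : ∀ s₁ : Fin t, ∑ v : Fin t → Fin K, (∏ s, p (v s)) *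
        ((if v s₀ = k then (1:ℝ) else 0) * (if v s₁ = k then (1:ℝ) else 0))
        = if s₁ = s₀ then p k else p k ^ 2 := by
      intro s₁
      by_cases h : s₁ = s₀
      · subst h
        have : ∀ v : Fin t → Fin K, ((if v s₁ = k then (1:ℝ) else 0) * (if v s₁ = k then (1:ℝ) else 0))
            = (if v s₁ = k then (1:ℝ) else 0) := by
          intro v; by_cases hv : v s₁ = k <;> simp [hv]
        rw [Finset.sum_congr rfl fun v _ => by rw [this v], if_pos rfl]
        exact mom1 p hp k s₁
      · simp only [h, if_false]
        exact mom2 p hp k (fun he => h he.symm)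
    rw [Finset.sum_congr rfl fun s₁ _ => each s₁]
    have : ∀ s₁ : Fin t, (if s₁ = s₀ then p k else p k ^ 2)
        = p k ^ 2 + (if s₁ = s₀ then p k - p k ^ 2 else 0) := by
      intro s₁; by_cases h : s₁ = s₀ <;> simp [h]
    rw [Finset.sum_congr rfl fun s₁ _ => this s₁, Finset.sum_add_distrib,
      Finset.sum_ite_eq' Finset.univ s₀ (fun _ => p k - p k ^ 2)]
    simp
    ring
  rw [Finset.sum_congr rfl fun s₀ _ => inner s₀]
  simp only [Finset.sum_const, Finset.card_univ, Fintype.card_fin, nsmul_eq_mul]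
  field_simp
  ring

lemma var_bound (hp : IsDist p) (ht : 1 ≤ t) (k : Fin K) :
    ∑ v : Fin t → Fin K, (∏ s, p (v s)) * (emp t K v k - p k) ^ 2 ≤ p k / t := by
  have ht' : (0:ℝ) < t := by positivity
  have expand : ∀ v : Fin t → Fin K,
      (∏ s, p (v s)) * (emp t K v k - p k) ^ 2
      = (∏ s, p (v s)) * (emp t K v k) ^ 2
        - 2 * p k * ((∏ s, p (v s)) * emp t K v k) + p k ^ 2 * (∏ s, p (v s)) := by
    intro v; ring
  rw [Finset.sum_congr rfl fun v _ => expand v, Finset.sum_add_distrib,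
    Finset.sum_sub_distrib, ← Finset.mul_sum, ← Finset.mul_sum,
    exp_emp_sq p hp ht k, exp_emp p hp ht k, sum_W p hp]
  have hk : 0 ≤ p k := hp.1 k
  have : p k ^ 2 / t ≥ 0 := by positivity
  nlinarith

lemma hell_exp (hp : IsDist p) (ht : 1 ≤ t) :
    ∑ v : Fin t → Fin K, (∏ s, p (v s)) *
      (∑ k, (Real.sqrt (p k) - Real.sqrt (emp t K v k)) ^ 2) ≤ (K : ℝ) / t := by
  have ht' : (0:ℝ) < t := by positivity
  rw [Finset.sum_congr rfl fun v _ => Finset.mul_sum _ _ _, Finset.sum_comm]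
  have each : ∀ k : Fin K, ∑ v : Fin t → Fin K,
      (∏ s, p (v s)) * (Real.sqrt (p k) - Real.sqrt (emp t K v k)) ^ 2 ≤ 1 / t := by
    intro k
    have hWnn : ∀ v : Fin t → Fin K, 0 ≤ ∏ s, p (v s) :=
      fun v => Finset.prod_nonneg fun s _ => hp.1 (v s)
    by_cases hk : p k = 0
    · have : ∀ v : Fin t → Fin K,
          (Real.sqrt (p k) - Real.sqrt (emp t K v k)) ^ 2 = emp t K v k := by
        intro v
        rw [hk, Real.sqrt_zero]
        have := emp_nonneg (t := t) v k
        rw [zero_sub, neg_pow, Real.sq_sqrt this]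
        ring
      rw [Finset.sum_congr rfl fun v _ => by rw [this v]]
      rw [exp_emp p hp ht k, hk]
      positivity
    · have hkpos : 0 < p k := lt_of_le_of_ne (hp.1 k) (Ne.symm hk)
      have key : ∀ v : Fin t → Fin K,
          (Real.sqrt (p k) - Real.sqrt (emp t K v k)) ^ 2 ≤ (emp t K v k - p k) ^ 2 / p k := by
        intro v
        have he := emp_nonneg (t := t) v k
        have h1 : Real.sqrt (p k) ^ 2 = p k := Real.sq_sqrt (hp.1 k)
        have h2 : Real.sqrt (emp t K v k) ^ 2 = emp t K v k := Real.sq_sqrt he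
        have h3 : 0 ≤ Real.sqrt (p k) := Real.sqrt_nonneg _
        have h4 : 0 ≤ Real.sqrt (emp t K v k) := Real.sqrt_nonneg _
        have h5 : 0 ≤ 2 * Real.sqrt (p k) * Real.sqrt (emp t K v k) + emp t K v k := by
          nlinarith [mul_nonneg h3 h4, he]
        have h6 := mul_nonneg (sq_nonneg (Real.sqrt (p k) - Real.sqrt (emp t K v k))) h5
        rw [le_div_iff₀ hkpos]
        nlinarith [h6, h1, h2]
      calc ∑ v : Fin t → Fin K, (∏ s, p (v s)) * (Real.sqrt (p k) - Real.sqrt (emp t K v k)) ^ 2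
          ≤ ∑ v : Fin t → Fin K, (∏ s, p (v s)) * ((emp t K v k - p k) ^ 2 / p k) :=
            Finset.sum_le_sum fun v _ => mul_le_mul_of_nonneg_left (key v) (hWnn v)
        _ = (∑ v : Fin t → Fin K, (∏ s, p (v s)) * (emp t K v k - p k) ^ 2) / p k := by
            rw [Finset.sum_div]; exact Finset.sum_congr rfl fun v _ => by ring
        _ ≤ (p k / t) / p k := by
            rw [div_le_div_iff_of_pos_right hkpos]
            exact var_bound p hp ht k
        _ = 1 / t := by
            rw [div_div, mul_comm, ← div_div, div_self (ne_of_gt hkpos)]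
  calc ∑ k : Fin K, ∑ v : Fin t → Fin K,
        (∏ s, p (v s)) * (Real.sqrt (p k) - Real.sqrt (emp t K v k)) ^ 2
      ≤ ∑ k : Fin K, 1 / (t:ℝ) := Finset.sum_le_sum fun k _ => each k
    _ = (K : ℝ) * (1 / t) := by simp
    _ = (K : ℝ) / t := by ring


lemma weierstrass {ι : Type*} (s : Finset ι) (x : ι → ℝ) (h0 : ∀ i ∈ s, 0 ≤ x i)
    (h1 : ∀ i ∈ s, x i ≤ 1) : 1 - ∑ i ∈ s, (1 - x i) ≤ ∏ i ∈ s, x i := by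
  induction s using Finset.cons_induction with
  | empty => simp
  | cons a s ha ih =>
    rw [Finset.prod_cons, Finset.sum_cons]
    have h0a := h0 a (Finset.mem_cons_self a s)
    have h1a := h1 a (Finset.mem_cons_self a s)
    have ih' := ih (fun i hi => h0 i (Finset.mem_cons_of_mem hi))
      (fun i hi => h1 i (Finset.mem_cons_of_mem hi))
    have hS : 0 ≤ ∑ i ∈ s, (1 - x i) :=
      Finset.sum_nonneg fun i hi => by linarith [h1 i (Finset.mem_cons_of_mem hi)]
    nlinarith [ih', hS, h0a, h1a]

lemma sqrt_prod {ι : Type*} (s : Finset ι) (x : ι → ℝ) (h0 : ∀ i ∈ s, 0 ≤ x i) :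
    Real.sqrt (∏ i ∈ s, x i) = ∏ i ∈ s, Real.sqrt (x i) := by
  induction s using Finset.cons_induction with
  | empty => simp
  | cons a s ha ih =>
    rw [Finset.prod_cons, Finset.prod_cons, Real.sqrt_mul (h0 a (Finset.mem_cons_self a s)),
      ih (fun i hi => h0 i (Finset.mem_cons_of_mem hi))]

/-- Pointwise: squared TV distance between products is at most the sum of
per-coordinate squared Hellinger-type quantities. -/
lemma tv_sq_le {n K : ℕ} (p q : Fin n → Fin K → ℝ)
    (hp : ∀ i, IsDist (p i)) (hq : ∀ i, IsDist (q i)) :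
    ((1/2) * ∑ θ : Fin n → Fin K, |(∏ i, p i (θ i)) - (∏ i, q i (θ i))|) ^ 2
      ≤ ∑ i, ∑ k, (Real.sqrt (p i k) - Real.sqrt (q i k)) ^ 2 := by
  set P : (Fin n → Fin K) → ℝ := fun θ => ∏ i, p i (θ i) with hP
  set Q : (Fin n → Fin K) → ℝ := fun θ => ∏ i, q i (θ i) with hQ
  have hPnn : ∀ θ, 0 ≤ P θ := fun θ => Finset.prod_nonneg fun i _ => (hp i).1 _
  have hQnn : ∀ θ, 0 ≤ Q θ := fun θ => Finset.prod_nonneg fun i _ => (hq i).1 _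
  have hPsum : ∑ θ, P θ = 1 := by
    rw [hP, sum_pi_prod]
    rw [Finset.prod_congr rfl fun i _ => (hp i).2]; simp
  have hQsum : ∑ θ, Q θ = 1 := by
    rw [hQ, sum_pi_prod]
    rw [Finset.prod_congr rfl fun i _ => (hq i).2]; simp
  set r : Fin n → ℝ := fun i => ∑ k, Real.sqrt (p i k) * Real.sqrt (q i k) with hr
  have hr0 : ∀ i, 0 ≤ r i := fun i => Finset.sum_nonneg fun k _ =>
    mul_nonneg (Real.sqrt_nonneg _) (Real.sqrt_nonneg _)
  have hr1 : ∀ i, r i ≤ 1 := by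
    intro i
    have := Finset.sum_mul_sq_le_sq_mul_sq Finset.univ
      (fun k => Real.sqrt (p i k)) (fun k => Real.sqrt (q i k))
    have e1 : ∑ k, Real.sqrt (p i k) ^ 2 = 1 := by
      rw [Finset.sum_congr rfl fun k _ => Real.sq_sqrt ((hp i).1 k)]; exact (hp i).2
    have e2 : ∑ k, Real.sqrt (q i k) ^ 2 = 1 := by
      rw [Finset.sum_congr rfl fun k _ => Real.sq_sqrt ((hq i).1 k)]; exact (hq i).2
    rw [e1, e2] at this
    nlinarith [hr0 i]
  have hcross : ∑ θ, Real.sqrt (P θ) * Real.sqrt (Q θ) = ∏ i, r i := by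
    have : ∀ θ : Fin n → Fin K, Real.sqrt (P θ) * Real.sqrt (Q θ)
        = ∏ i, (Real.sqrt (p i (θ i)) * Real.sqrt (q i (θ i))) := by
      intro θ
      rw [hP, hQ]
      rw [sqrt_prod Finset.univ _ (fun i _ => (hp i).1 _),
        sqrt_prod Finset.univ _ (fun i _ => (hq i).1 _), ← Finset.prod_mul_distrib]
    rw [Finset.sum_congr rfl fun θ _ => this θ]
    exact sum_pi_prod fun i k => Real.sqrt (p i k) * Real.sqrt (q i k)
  have hprodr_le : ∏ i, r i ≤ 1 := Finset.prod_le_one (fun i _ => hr0 i) (fun i _ => hr1 i)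
  have S1 : ∑ θ, (Real.sqrt (P θ) - Real.sqrt (Q θ)) ^ 2 = 2 - 2 * ∏ i, r i := by
    have : ∀ θ, (Real.sqrt (P θ) - Real.sqrt (Q θ)) ^ 2
        = P θ + Q θ - 2 * (Real.sqrt (P θ) * Real.sqrt (Q θ)) := by
      intro θ
      have h1 := Real.sq_sqrt (hPnn θ); have h2 := Real.sq_sqrt (hQnn θ)
      nlinarith [h1, h2]
    rw [Finset.sum_congr rfl fun θ _ => this θ, Finset.sum_sub_distrib,
      Finset.sum_add_distrib, ← Finset.mul_sum, hPsum, hQsum, hcross]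
    ring
  have S2 : ∑ θ, (Real.sqrt (P θ) + Real.sqrt (Q θ)) ^ 2 ≤ 4 := by
    have : ∀ θ, (Real.sqrt (P θ) + Real.sqrt (Q θ)) ^ 2
        = P θ + Q θ + 2 * (Real.sqrt (P θ) * Real.sqrt (Q θ)) := by
      intro θ
      have h1 := Real.sq_sqrt (hPnn θ); have h2 := Real.sq_sqrt (hQnn θ)
      nlinarith [h1, h2]
    rw [Finset.sum_congr rfl fun θ _ => this θ, Finset.sum_add_distrib,
      Finset.sum_add_distrib, ← Finset.mul_sum, hPsum, hQsum, hcross]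
    linarith [hprodr_le]
  have habs : ∀ θ, |P θ - Q θ|
      = |Real.sqrt (P θ) - Real.sqrt (Q θ)| * (Real.sqrt (P θ) + Real.sqrt (Q θ)) := by
    intro θ
    have h1 := Real.sq_sqrt (hPnn θ); have h2 := Real.sq_sqrt (hQnn θ)
    have hd : P θ - Q θ = (Real.sqrt (P θ) - Real.sqrt (Q θ)) * (Real.sqrt (P θ) + Real.sqrt (Q θ)) := by
      nlinarith [h1, h2]
    rw [hd, abs_mul, abs_of_nonneg (by positivity : (0:ℝ) ≤ Real.sqrt (P θ) + Real.sqrt (Q θ))]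
  have CS : (∑ θ, |P θ - Q θ|) ^ 2
      ≤ (∑ θ, (Real.sqrt (P θ) - Real.sqrt (Q θ)) ^ 2) *
        (∑ θ, (Real.sqrt (P θ) + Real.sqrt (Q θ)) ^ 2) := by
    have := Finset.sum_mul_sq_le_sq_mul_sq Finset.univ
      (fun θ => |Real.sqrt (P θ) - Real.sqrt (Q θ)|)
      (fun θ => Real.sqrt (P θ) + Real.sqrt (Q θ))
    simp only [sq_abs] at this
    rw [Finset.sum_congr rfl fun θ _ => habs θ]
    exact this
  have hsum1r : 0 ≤ ∑ i, (1 - r i) := Finset.sum_nonneg fun i _ => by linarith [hr1 i]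
  have hW := weierstrass Finset.univ r (fun i _ => hr0 i) (fun i _ => hr1 i)
  have S1le : ∑ θ, (Real.sqrt (P θ) - Real.sqrt (Q θ)) ^ 2 ≤ 2 * ∑ i, (1 - r i) := by
    rw [S1]; linarith [hW]
  have S1nn : 0 ≤ ∑ θ, (Real.sqrt (P θ) - Real.sqrt (Q θ)) ^ 2 :=
    Finset.sum_nonneg fun θ _ => sq_nonneg _
  have S2nn : 0 ≤ ∑ θ, (Real.sqrt (P θ) + Real.sqrt (Q θ)) ^ 2 :=
    Finset.sum_nonneg fun θ _ => sq_nonneg _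
  have key : (∑ θ, |P θ - Q θ|) ^ 2 ≤ (2 * ∑ i, (1 - r i)) * 4 := by
    calc (∑ θ, |P θ - Q θ|) ^ 2
        ≤ (∑ θ, (Real.sqrt (P θ) - Real.sqrt (Q θ)) ^ 2) *
          (∑ θ, (Real.sqrt (P θ) + Real.sqrt (Q θ)) ^ 2) := CS
      _ ≤ (2 * ∑ i, (1 - r i)) * 4 :=
          mul_le_mul S1le S2 S2nn (by linarith [hsum1r])
  have hfin : ∀ i, ∑ k, (Real.sqrt (p i k) - Real.sqrt (q i k)) ^ 2 = 2 * (1 - r i) := by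
    intro i
    have : ∀ k, (Real.sqrt (p i k) - Real.sqrt (q i k)) ^ 2
        = p i k + q i k - 2 * (Real.sqrt (p i k) * Real.sqrt (q i k)) := by
      intro k
      have h1 := Real.sq_sqrt ((hp i).1 k); have h2 := Real.sq_sqrt ((hq i).1 k)
      nlinarith [h1, h2]
    rw [Finset.sum_congr rfl fun k _ => this k, Finset.sum_sub_distrib,
      Finset.sum_add_distrib, ← Finset.mul_sum, (hp i).2, (hq i).2]
    rw [hr]; ring
  have hRHS : ∑ i, ∑ k, (Real.sqrt (p i k) - Real.sqrt (q i k)) ^ 2 = 2 * ∑ i, (1 - r i) := by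
    rw [Finset.sum_congr rfl fun i _ => hfin i, Finset.mul_sum]
  rw [hRHS]
  nlinarith [key, Finset.sum_nonneg (fun θ (_ : θ ∈ Finset.univ) => abs_nonneg (P θ - Q θ))]

/-- Marginalization: the expectation of a function of the `i`-th column. -/
lemma marg {n K t : ℕ} (Dm : Fin n → Fin K → ℝ) (hDm : ∀ j, IsDist (Dm j)) (i : Fin n)
    (f : (Fin t → Fin K) → ℝ) :
    ∑ ω : Fin t → Fin n → Fin K, (∏ s, ∏ j, Dm j (ω s j)) * f (fun s => ω s i)
      = ∑ v : Fin t → Fin K, (∏ s, Dm i (v s)) * f v := by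
  have swap : ∑ ω : Fin t → Fin n → Fin K, (∏ s, ∏ j, Dm j (ω s j)) * f (fun s => ω s i)
      = ∑ τ : Fin n → Fin t → Fin K, (∏ j, ∏ s, Dm j (τ j s)) * f (τ i) := by
    refine (Fintype.sum_equiv (Equiv.piComm fun (j : Fin n) (s : Fin t) => Fin K)
      (fun τ => (∏ j, ∏ s, Dm j (τ j s)) * f (τ i))
      (fun ω => (∏ s, ∏ j, Dm j (ω s j)) * f (fun s => ω s i)) ?_).symm
    intro τ
    show (∏ j, ∏ s, Dm j (τ j s)) * f (τ i) = (∏ s, ∏ j, Dm j (τ j s)) * f (fun s => τ i s)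
    rw [Finset.prod_comm]
  rw [swap]
  have step : ∀ τ : Fin n → Fin t → Fin K,
      (∏ j, ∏ s, Dm j (τ j s)) * f (τ i)
      = ∏ j, ((∏ s, Dm j (τ j s)) * (if j = i then f (τ j) else 1)) := by
    intro τ
    rw [Finset.prod_mul_distrib,
      Finset.prod_ite_eq' Finset.univ i (fun j => f (τ j))]
    simp
  rw [Finset.sum_congr rfl fun τ _ => step τ,
    sum_pi_prod (fun j (v : Fin t → Fin K) => (∏ s, Dm j (v s)) * (if j = i then f v else 1))]
  have hG : ∀ j, (∑ v : Fin t → Fin K, (∏ s, Dm j (v s)) * (if j = i then f v else 1))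
      = if j = i then (∑ v : Fin t → Fin K, (∏ s, Dm i (v s)) * f v) else 1 := by
    intro j
    by_cases hj : j = i
    · subst hj; simp
    · simp only [hj, if_false, mul_one]
      exact sum_W (Dm j) (hDm j)
  rw [Finset.prod_congr rfl fun j _ => hG j,
    Finset.prod_ite_eq' Finset.univ i
      (fun _ => ∑ v : Fin t → Fin K, (∏ s, Dm i (v s)) * f v)]
  simp

end Stmt12Aux

open Stmt12Aux in
/-- If `D = D_1 × ⋯ × D_n` is a product distribution on `[K]^n` and
`D̂^t` is the product of the empirical marginals of `t` i.i.d. samples from `D`, then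
`E[δ(D, D̂^t)] ≤ √(nK/t)`, where `δ` is the total variation distance. -/
theorem stmt12 (n K t : ℕ) (hn : 1 ≤ n) (hK : 1 ≤ K) (ht : 1 ≤ t)
    (Dm : Fin n → Fin K → ℝ) (hDm : ∀ i, IsDist (Dm i)) :
    ∑ ω : Fin t → (Fin n → Fin K), (∏ s, ∏ i, Dm i (ω s i)) *
        ((1 / 2) * ∑ θ : Fin n → Fin K, |(∏ i, Dm i (θ i)) - empProd t ω θ|)
      ≤ Real.sqrt (((n * K : ℕ) : ℝ) / (t : ℝ)) := by
  classical
  have ht' : (0:ℝ) < t := by positivity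
  set W : (Fin t → Fin n → Fin K) → ℝ := fun ω => ∏ s, ∏ i, Dm i (ω s i) with hWdef
  set del : (Fin t → Fin n → Fin K) → ℝ :=
    fun ω => (1 / 2) * ∑ θ : Fin n → Fin K, |(∏ i, Dm i (θ i)) - empProd t ω θ| with hdel
  have hW0 : ∀ ω, 0 ≤ W ω := fun ω =>
    Finset.prod_nonneg fun s _ => Finset.prod_nonneg fun i _ => (hDm i).1 _
  have hWsum : ∑ ω, W ω = 1 := by
    rw [hWdef]
    rw [sum_pi_prod (fun (s : Fin t) (x : Fin n → Fin K) => ∏ i, Dm i (x i))]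
    have : ∀ s : Fin t, ∑ x : Fin n → Fin K, ∏ i, Dm i (x i) = 1 := by
      intro s
      rw [sum_pi_prod (fun (i : Fin n) (k : Fin K) => Dm i k)]
      rw [Finset.prod_congr rfl fun i _ => (hDm i).2]
      simp
    rw [Finset.prod_congr rfl fun s _ => this s]
    simp
  have hdel0 : ∀ ω, 0 ≤ del ω := fun ω =>
    mul_nonneg (by norm_num) (Finset.sum_nonneg fun θ _ => abs_nonneg _)
  have hempProd : ∀ (ω : Fin t → Fin n → Fin K) (θ : Fin n → Fin K),
      empProd t ω θ = ∏ i, emp t K (fun s => ω s i) (θ i) := fun ω θ => rfl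
  have hpoint : ∀ ω, del ω ^ 2 ≤
      ∑ i, ∑ k, (Real.sqrt (Dm i k) - Real.sqrt (emp t K (fun s => ω s i) k)) ^ 2 := by
    intro ω
    have := tv_sq_le Dm (fun i => emp t K (fun s => ω s i)) hDm
      (fun i => emp_isDist ht (fun s => ω s i))
    rw [hdel]
    simpa [hempProd ω] using this
  have hE2 : ∑ ω, W ω * del ω ^ 2 ≤ ((n * K : ℕ) : ℝ) / t := by
    calc ∑ ω, W ω * del ω ^ 2
        ≤ ∑ ω, W ω * ∑ i, ∑ k,
            (Real.sqrt (Dm i k) - Real.sqrt (emp t K (fun s => ω s i) k)) ^ 2 :=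
          Finset.sum_le_sum fun ω _ => mul_le_mul_of_nonneg_left (hpoint ω) (hW0 ω)
      _ = ∑ i, ∑ ω, W ω * ∑ k,
            (Real.sqrt (Dm i k) - Real.sqrt (emp t K (fun s => ω s i) k)) ^ 2 := by
          rw [Finset.sum_congr rfl fun ω _ => Finset.mul_sum _ _ _, Finset.sum_comm]
      _ = ∑ i, ∑ v : Fin t → Fin K, (∏ s, Dm i (v s)) * ∑ k,
            (Real.sqrt (Dm i k) - Real.sqrt (emp t K v k)) ^ 2 :=
          Finset.sum_congr rfl fun i _ =>
            marg Dm hDm i (fun v => ∑ k, (Real.sqrt (Dm i k) - Real.sqrt (emp t K v k)) ^ 2)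
      _ ≤ ∑ i : Fin n, (K : ℝ) / t :=
          Finset.sum_le_sum fun i _ => hell_exp (Dm i) (hDm i) ht
      _ = ((n * K : ℕ) : ℝ) / t := by
          push_cast
          rw [Finset.sum_const, Finset.card_univ, Fintype.card_fin, nsmul_eq_mul]
          ring
  have hE0 : 0 ≤ ∑ ω, W ω * del ω := Finset.sum_nonneg fun ω _ =>
    mul_nonneg (hW0 ω) (hdel0 ω)
  have hCS : (∑ ω, W ω * del ω) ^ 2 ≤ ∑ ω, W ω * del ω ^ 2 := by
    have := Finset.sum_mul_sq_le_sq_mul_sq Finset.univ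
      (fun ω => Real.sqrt (W ω)) (fun ω => Real.sqrt (W ω) * del ω)
    have e1 : ∀ ω, Real.sqrt (W ω) * (Real.sqrt (W ω) * del ω) = W ω * del ω := by
      intro ω; rw [← mul_assoc, Real.mul_self_sqrt (hW0 ω)]
    have e2 : ∀ ω, Real.sqrt (W ω) ^ 2 = W ω := fun ω => Real.sq_sqrt (hW0 ω)
    have e3 : ∀ ω, (Real.sqrt (W ω) * del ω) ^ 2 = W ω * del ω ^ 2 := by
      intro ω; rw [mul_pow, e2 ω]
    rw [Finset.sum_congr rfl fun ω _ => e1 ω, Finset.sum_congr rfl fun ω _ => e2 ω,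
      Finset.sum_congr rfl fun ω _ => e3 ω, hWsum, one_mul] at this
    exact this
  have : (∑ ω, W ω * del ω) ^ 2 ≤ ((n * K : ℕ) : ℝ) / t := le_trans hCS hE2
  calc ∑ ω, W ω * del ω = Real.sqrt ((∑ ω, W ω * del ω) ^ 2) := (Real.sqrt_sq hE0).symm
    _ ≤ Real.sqrt (((n * K : ℕ) : ℝ) / t) := Real.sqrt_le_sqrt this
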